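/- Let σ > 0 and s ∈ ℝ. Define the privacy loss function L(x) := ln(φ_{0,σ²}(x)/φ_{s,σ²}(x)) = (s² − 2·s·x)/(2σ²). Then the pushforward of the Gaussian probability measure with mean 0 and variance σ² on ℝ under L equals the Gaussian probability measure with mean s²/(2σ²) and variance s²/σ². -/

import Mathlib

open MeasureTheory ProbabilityTheory

theorem privacy_loss_distribution_gaussian (σ s : ℝ) (hσ : 0 < σ) :
    Measure.map (fun x : ℝ => (s ^ 2 - 2 * s * x) / (2 * σ ^ 2))
        (gaussianReal 0 (Real.toNNReal (σ ^ 2))) =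
      gaussianReal (s ^ 2 / (2 * σ ^ 2)) (Real.toNNReal (s ^ 2 / σ ^ 2)) := by
  have hσ2 : (0:ℝ) < σ ^ 2 := by positivity
  have hfun : (fun x : ℝ => (s ^ 2 - 2 * s * x) / (2 * σ ^ 2))
      = (fun y : ℝ => y + s ^ 2 / (2 * σ ^ 2)) ∘ (fun x => (-(s / σ ^ 2)) * x) := by
    funext x; simp only [Function.comp_apply]; field_simp; ring
  rw [hfun, ← Measure.map_map (by fun_prop) (by fun_prop),
    gaussianReal_map_const_mul, gaussianReal_map_add_const]
  congr 1
  · ring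
  · ext
    push_cast
    rw [Real.coe_toNNReal _ hσ2.le, Real.coe_toNNReal _ (by positivity)]
    field_simp
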